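/- Let k be an algebraically closed field of characteristic 2, N ≥ 3 odd with N + 1 = 2r, and Z ⊂ P^N_k the complete intersection of the quadrics q = Σ_{i=1}^r X_i Y_i and q' = Σ_{i=1}^r (a_i X_i Y_i + c_i X_i² + d_i Y_i²) in coordinates X_1, ..., X_r, Y_1, ..., Y_r. For any diagonal r×r matrix D over k, the matrix g = Id + ε·diag(D, D) over the dual numbers k[ε]/(ε²) preserves the span of q and q' under substitution. Consequently, the tangent space at the identity of the group of linear transformations preserving {q, q'} has dimension at least r, and the tangent space at the identity of the projective automorphism group of Z has dimension at least (N-1)/2. -/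

import Mathlib

/-!
Statement 16: Let `k` be algebraically closed of characteristic `2`, `N ≥ 3` odd with
`N + 1 = 2r`, and `Z ⊆ ℙ^N_k` the complete intersection of the quadrics
`q = Σᵢ Xᵢ Yᵢ` and `q' = Σᵢ (aᵢ Xᵢ Yᵢ + cᵢ Xᵢ² + dᵢ Yᵢ²)` (coordinates
`X₁, …, X_r, Y₁, …, Y_r`, modelled on the index type `Fin r ⊕ Fin r`).
For any diagonal `r × r` matrix `D`, the matrix `g = Id + ε·diag(D, D)` over the dual
numbers `k[ε]/(ε²)` preserves the span of `q` and `q'` under substitution.  Consequently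
the tangent space at the identity of the group of linear transformations preserving
`{q, q'}` has dimension at least `r` (witnessed by the injective family `D ↦ diag(D, D)`),
and the tangent space at the identity of the projective automorphism group of `Z` has
dimension at least `(N - 1)/2 = r - 1`.
-/

open MvPolynomial

noncomputable section

/-- Substitution of variables by the linear forms given by the rows of a matrix. -/
def substMatrix {ι R : Type} [Fintype ι] [DecidableEq ι] [CommSemiring R]
    (g : Matrix ι ι R) (P : MvPolynomial ι R) : MvPolynomial ι R :=
  MvPolynomial.bind₁ (fun j => ∑ i, MvPolynomial.C (g j i) * MvPolynomial.X i) P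

/-- The block diagonal matrix `diag(D, D)` on the index type `Fin r ⊕ Fin r`. -/
def doubleDiag {k : Type} [Field k] {r : ℕ} (D : Fin r → k) :
    Matrix (Fin r ⊕ Fin r) (Fin r ⊕ Fin r) k :=
  Matrix.of fun x y => if x = y then Sum.elim D D x else 0

theorem tangent_space_of_automorphisms_of_intersection_of_two_quadrics_char_two
    (k : Type) [Field k] [IsAlgClosed k] (hchar : ringChar k = 2)
    (N r : ℕ) (hN : 3 ≤ N) (hNr : N + 1 = 2 * r)
    (a c' d' : Fin r → k) :
    (∀ D : Fin r → k,
      letI A := DualNumber k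
      letI g : Matrix (Fin r ⊕ Fin r) (Fin r ⊕ Fin r) A :=
        1 + (DualNumber.eps : A) • ((doubleDiag D).map (algebraMap k A))
      letI qA : MvPolynomial (Fin r ⊕ Fin r) A :=
        MvPolynomial.map (algebraMap k A)
          (∑ i, X (Sum.inl i) * X (Sum.inr i) : MvPolynomial (Fin r ⊕ Fin r) k)
      letI q'A : MvPolynomial (Fin r ⊕ Fin r) A :=
        MvPolynomial.map (algebraMap k A)
          (∑ i, (MvPolynomial.C (a i) * X (Sum.inl i) * X (Sum.inr i) +
            MvPolynomial.C (c' i) * X (Sum.inl i) ^ 2 +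
            MvPolynomial.C (d' i) * X (Sum.inr i) ^ 2) : MvPolynomial (Fin r ⊕ Fin r) k)
      ∃ α β γ δ : A,
        substMatrix g qA = MvPolynomial.C α * qA + MvPolynomial.C β * q'A ∧
        substMatrix g q'A = MvPolynomial.C γ * qA + MvPolynomial.C δ * q'A) ∧
    -- the family `D ↦ Id + ε·diag(D, D)` of tangent vectors is `r`-dimensional …
    Function.Injective (fun D : Fin r → k => doubleDiag D) ∧
    -- … so, modulo the one-dimensional space of homotheties (scalar matrices), the tangent
    -- space at the identity of the projective automorphism group of `Z` has dimension at
    -- least `(N - 1) / 2`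
    (((N - 1) / 2 : ℕ) : Cardinal) ≤ Module.rank k
      ((Fin r → k) ⧸ (Submodule.span k {fun _ => (1 : k)})) := by
  have hk2 : (2 : k) = 0 := by
    haveI : CharP k 2 := hchar ▸ ringChar.charP k
    exact_mod_cast CharP.cast_eq_zero k 2
  refine ⟨?_, ?_, ?_⟩
  · intro D
    set φ := algebraMap k (DualNumber k) with hφ
    have hA2 : (2 : (DualNumber k)) = 0 := by
      rw [show (2 : (DualNumber k)) = φ 2 from (map_ofNat φ 2).symm, hk2, map_zero]
    set g : Matrix (Fin r ⊕ Fin r) (Fin r ⊕ Fin r) (DualNumber k) :=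
      1 + (DualNumber.eps : (DualNumber k)) • ((doubleDiag D).map φ) with hg
    set u : Fin r ⊕ Fin r → (DualNumber k) :=
      fun j => 1 + DualNumber.eps * φ (Sum.elim D D j) with hu
    have husq : ∀ x y : Fin r, ∀ j j' : Fin r ⊕ Fin r,
        Sum.elim D D j = Sum.elim D D j' → u j * u j' = 1 := by
      intro x y j j' h
      simp only [hu, h]
      ring_nf
      rw [pow_two, DualNumber.eps_mul_eps, hA2]
      ring
    have hrow : ∀ j, (∑ i, MvPolynomial.C (g j i) * (X i : MvPolynomial (Fin r ⊕ Fin r) (DualNumber k)))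
        = MvPolynomial.C (u j) * X j := by
      intro j
      rw [Finset.sum_eq_single j]
      · congr 2
        simp [hg, hu, doubleDiag, Matrix.one_apply, smul_eq_mul]
      · intro i _ hij
        have hz : g j i = 0 := by
          simp [hg, doubleDiag, Matrix.one_apply, Ne.symm hij, fun h : j = i => hij h.symm]
        simp [hz]
      · intro h
        exact absurd (Finset.mem_univ j) h
    have hsub : ∀ P : MvPolynomial (Fin r ⊕ Fin r) (DualNumber k),
        substMatrix g P = bind₁ (fun j => MvPolynomial.C (u j) * X j) P := by
      intro P
      unfold substMatrix
      rw [show (fun j => ∑ i, MvPolynomial.C (g j i) * (X i : MvPolynomial (Fin r ⊕ Fin r) (DualNumber k)))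
        = fun j => MvPolynomial.C (u j) * X j from funext hrow]
    have e1 : ∀ i : Fin r, (MvPolynomial.C (u (Sum.inl i)) : MvPolynomial (Fin r ⊕ Fin r) (DualNumber k))
        * MvPolynomial.C (u (Sum.inl i)) = 1 := fun i => by
      rw [← C_mul, husq i i _ _ rfl, map_one]
    have e2 : ∀ i : Fin r, (MvPolynomial.C (u (Sum.inr i)) : MvPolynomial (Fin r ⊕ Fin r) (DualNumber k))
        * MvPolynomial.C (u (Sum.inr i)) = 1 := fun i => by
      rw [← C_mul, husq i i _ _ rfl, map_one]
    have e3 : ∀ i : Fin r, (MvPolynomial.C (u (Sum.inl i)) : MvPolynomial (Fin r ⊕ Fin r) (DualNumber k))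
        * MvPolynomial.C (u (Sum.inr i)) = 1 := fun i => by
      rw [← C_mul, husq i i (Sum.inl i) (Sum.inr i) rfl, map_one]
    refine ⟨1, 0, 0, 1, ?_, ?_⟩
    · simp only [hsub, map_sum, map_mul, map_add, map_pow, MvPolynomial.map_X,
        MvPolynomial.map_C, bind₁_X_right, map_one, map_zero, one_mul, zero_mul, add_zero, zero_add]
      refine Finset.sum_congr rfl fun i _ => ?_
      rw [mul_mul_mul_comm, e3 i, one_mul]
    · simp only [hsub, map_sum, map_mul, map_add, map_pow, MvPolynomial.map_X,
        MvPolynomial.map_C, bind₁_X_right, bind₁_C_right, map_one, map_zero, one_mul,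
        zero_mul, add_zero, zero_add]
      refine Finset.sum_congr rfl fun i _ => ?_
      rw [mul_pow, mul_pow, pow_two (MvPolynomial.C (u (Sum.inl i))),
        pow_two (MvPolynomial.C (u (Sum.inr i))), e1 i, e2 i, one_mul, one_mul,
        mul_assoc (MvPolynomial.C (φ (a i))), mul_mul_mul_comm, e3 i, one_mul,
        ← mul_assoc]
  · intro D D' h
    funext i
    have := congrFun (congrFun h (Sum.inl i)) (Sum.inl i)
    simpa [doubleDiag] using this
  · have hr : 2 ≤ r := by omega
    have hne : (fun _ => (1 : k) : Fin r → k) ≠ 0 := by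
      intro h
      have := congrFun h ⟨0, by omega⟩
      simp at this
    have h1 : Module.finrank k (Submodule.span k {(fun _ => (1 : k) : Fin r → k)}) = 1 :=
      finrank_span_singleton hne
    have h2 := Submodule.finrank_quotient_add_finrank
      (Submodule.span k {(fun _ => (1 : k) : Fin r → k)})
    rw [h1, Module.finrank_pi, Fintype.card_fin] at h2
    rw [← Module.finrank_eq_rank, Nat.cast_le]
    omega

end
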